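/- Let A, C ∈ GL_{2^n}(ℂ) with C a maximal cycle and A⁻¹CA ∈ ⟨C⟩ (so ⟨C⟩ is normal in ⟨A, C⟩). Let λ be a primitive 2^n-th root of unity. If there exists T ∈ GL_{2^n}(ℂ) such that T⁻¹CT is the diagonal matrix with diagonal entries λ^0, λ^1, …, λ^{2^n−1} and T⁻¹AT is a permutation matrix, then the matrix group ⟨A, C⟩ is a permutation matrix group. -/

import Mathlib

open Matrix

/-- A `d × d` complex matrix is a permutation matrix if it is the matrix of some
permutation of the standard basis. -/
def IsPermMatrix {d : ℕ} (M : Matrix (Fin d) (Fin d) ℂ) : Prop :=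
  ∃ σ : Equiv.Perm (Fin d), M = σ.permMatrix ℂ

/-- A `d × d` complex matrix is a maximal cycle if it is similar to the permutation
matrix of a cycle of length `d`. -/
def IsMaximalCycle {d : ℕ} (M : Matrix (Fin d) (Fin d) ℂ) : Prop :=
  ∃ T : (Matrix (Fin d) (Fin d) ℂ)ˣ,
    T⁻¹.val * M * T.val = (finRotate d).permMatrix ℂ

/-- A matrix group (subgroup of `GL_d(ℂ)`) is permutation-like if each of its elements
is similar to a permutation matrix. -/
def IsPermutationLikeGroup {d : ℕ} (G : Subgroup (GL (Fin d) ℂ)) : Prop :=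
  ∀ A ∈ G, ∃ T : (Matrix (Fin d) (Fin d) ℂ)ˣ,
    IsPermMatrix (T⁻¹.val * A.val * T.val)

/-- A matrix group is a permutation matrix group if a single similarity transformation
turns all of its elements into permutation matrices simultaneously. -/
def IsPermutationMatrixGroup {d : ℕ} (G : Subgroup (GL (Fin d) ℂ)) : Prop :=
  ∃ T : (Matrix (Fin d) (Fin d) ℂ)ˣ, ∀ A ∈ G,
    IsPermMatrix (T⁻¹.val * A.val * T.val)


lemma pm_mul_apply {d : ℕ} (σ : Equiv.Perm (Fin d)) (M : Matrix (Fin d) (Fin d) ℂ) (i j : Fin d) :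
    (σ.permMatrix ℂ * M) i j = M (σ i) j := by
  rw [Equiv.Perm.permMatrix, PEquiv.toMatrix_toPEquiv_mul, Matrix.submatrix_apply, id]

lemma mul_pm_apply {d : ℕ} (σ : Equiv.Perm (Fin d)) (M : Matrix (Fin d) (Fin d) ℂ) (i j : Fin d) :
    (M * σ.permMatrix ℂ) i j = M i (σ⁻¹ j) := by
  rw [Equiv.Perm.permMatrix, PEquiv.mul_toMatrix_toPEquiv, Matrix.submatrix_apply, id]
  rfl

lemma pm_mul_pm {d : ℕ} (σ τ : Equiv.Perm (Fin d)) :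
    σ.permMatrix ℂ * τ.permMatrix ℂ = (τ * σ).permMatrix ℂ := by
  rw [Equiv.Perm.permMatrix, Equiv.Perm.permMatrix, ← PEquiv.toMatrix_trans,
    ← Equiv.toPEquiv_trans]
  rfl

lemma pm_one {d : ℕ} : ((1 : Equiv.Perm (Fin d))).permMatrix ℂ = 1 := by
  rw [Equiv.Perm.permMatrix]
  show (Equiv.refl (Fin d)).toPEquiv.toMatrix = 1
  rw [Equiv.toPEquiv_refl, PEquiv.toMatrix_refl]

lemma unit_inv_pm {d : ℕ} (w : (Matrix (Fin d) (Fin d) ℂ)ˣ) (σ : Equiv.Perm (Fin d))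
    (h : w.val = σ.permMatrix ℂ) : w⁻¹.val = (σ⁻¹).permMatrix ℂ := by
  rw [Matrix.coe_units_inv, h]
  exact Matrix.inv_eq_right_inv (by rw [pm_mul_pm]; simp [pm_one])


theorem perm_basis_gives_permutation_matrix_group
    (n : ℕ) (A C : GL (Fin (2 ^ n)) ℂ)
    (hC : IsMaximalCycle C.val)
    (hnorm : A⁻¹ * C * A ∈ Subgroup.zpowers C)
    (lam : ℂ) (hlam : IsPrimitiveRoot lam (2 ^ n))
    (T : (Matrix (Fin (2 ^ n)) (Fin (2 ^ n)) ℂ)ˣ)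
    (hTC : T⁻¹.val * C.val * T.val =
      Matrix.diagonal (fun i : Fin (2 ^ n) => lam ^ (i : ℕ)))
    (hTA : IsPermMatrix (T⁻¹.val * A.val * T.val)) :
    IsPermutationMatrixGroup (Subgroup.closure {A, C}) := by
  classical
  have hN : 0 < 2 ^ n := Nat.two_pow_pos n
  haveI : NeZero (2 ^ n) := ⟨hN.ne'⟩
  obtain ⟨σ, hσ⟩ := hTA
  -- basic facts about lam
  have hlamN : lam ^ (2 ^ n) = 1 := hlam.pow_eq_one
  have hred : ∀ a : ℕ, lam ^ a = lam ^ (a % 2 ^ n) := by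
    intro a
    conv_lhs => rw [← Nat.div_add_mod a (2 ^ n)]
    rw [pow_add, pow_mul, hlamN, one_pow, one_mul]
  have hiff : ∀ a b : ℕ, lam ^ a = lam ^ b ↔ a % 2 ^ n = b % 2 ^ n := by
    intro a b
    constructor
    · intro h
      rw [hred a, hred b] at h
      exact hlam.pow_inj (Nat.mod_lt _ hN) (Nat.mod_lt _ hN) h
    · intro h; rw [hred a, hred b, h]
  -- the conjugated units
  set D : Matrix (Fin (2 ^ n)) (Fin (2 ^ n)) ℂ :=
    Matrix.diagonal (fun i : Fin (2 ^ n) => lam ^ (i : ℕ)) with hD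
  set c' : (Matrix (Fin (2 ^ n)) (Fin (2 ^ n)) ℂ)ˣ := T⁻¹ * C * T with hc'
  set a' : (Matrix (Fin (2 ^ n)) (Fin (2 ^ n)) ℂ)ˣ := T⁻¹ * A * T with ha'
  have hc'v : c'.val = D := by rw [hc']; simpa using hTC
  have ha'v : a'.val = σ.permMatrix ℂ := by rw [ha']; simpa using hσ
  -- order of c'
  have hDN : D ^ (2 ^ n) = 1 := by
    rw [hD, Matrix.diagonal_pow]
    have h1 : ((fun i : Fin (2 ^ n) => lam ^ (i : ℕ)) ^ (2 ^ n)) = fun _ => (1 : ℂ) := by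
      funext i
      rw [Pi.pow_apply, ← pow_mul, mul_comm, pow_mul, hlamN, one_pow]
    rw [h1, Matrix.diagonal_one]
  have hc'N : c' ^ (2 ^ n) = 1 := by
    ext
    rw [Units.val_pow_eq_pow_val, hc'v, hDN, Units.val_one]
  -- normality gives the exponent m
  obtain ⟨k, hk⟩ := Subgroup.mem_zpowers_iff.mp hnorm
  set m : ℕ := (k % (2 ^ n : ℤ)).toNat with hm
  have hmk : (m : ℤ) = k % (2 ^ n : ℤ) :=
    Int.toNat_of_nonneg (Int.emod_nonneg k (by exact_mod_cast hN.ne'))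
  have hkm : c' ^ k = c' ^ m := by
    have h0 : c' ^ (((2 ^ n : ℕ) : ℤ)) = 1 := by rw [_root_.zpow_natCast, hc'N]
    have h2 : ((2 ^ n : ℕ) : ℤ) = (2 ^ n : ℤ) := by push_cast; ring
    conv_lhs => rw [← Int.mul_ediv_add_emod k (2 ^ n : ℤ), ← h2]
    rw [_root_.zpow_add, _root_.zpow_mul, h0, _root_.one_zpow, one_mul, h2, ← hmk,
      _root_.zpow_natCast]
  have hconj : a'⁻¹ * c' * a' = c' ^ m := by
    have h1 : (T⁻¹ * C * T) ^ k = T⁻¹ * C ^ k * T := by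
      have h := map_zpow (MulAut.conj T⁻¹) C k
      simp only [MulAut.conj_apply, inv_inv] at h
      exact h.symm
    rw [← hkm, hc', ha', h1, hk]
    group
  -- the key congruence
  have hrel : ∀ i : Fin (2 ^ n),
      ((σ⁻¹ i : Fin (2 ^ n)) : ℕ) % 2 ^ n = ((i : ℕ) * m) % 2 ^ n := by
    intro i
    have ha'inv : a'⁻¹.val = (σ⁻¹).permMatrix ℂ := unit_inv_pm a' σ ha'v
    have hmat : (a'⁻¹ * c' * a').val = (c' ^ m).val := by rw [hconj]
    have h2 := congrFun (congrFun hmat i) i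
    rw [Units.val_mul, Units.val_mul, ha'inv, ha'v, Units.val_pow_eq_pow_val, hc'v, hD,
      Matrix.mul_assoc, pm_mul_apply, mul_pm_apply, Matrix.diagonal_pow,
      Matrix.diagonal_apply_eq, Matrix.diagonal_apply_eq, Pi.pow_apply, ← pow_mul] at h2
    exact (hiff _ _).mp h2
  have hkey : ∀ j c : Fin (2 ^ n),
      lam ^ (((σ j : Fin (2 ^ n)) : ℕ) * (c : ℕ)) =
      lam ^ ((j : ℕ) * ((σ c : Fin (2 ^ n)) : ℕ)) := by
    intro j c
    apply (hiff _ _).mpr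
    have h1 : ((j : ℕ)) ≡ ((σ j : Fin (2 ^ n)) : ℕ) * m [MOD 2 ^ n] := by
      have h := hrel (σ j)
      rw [show σ⁻¹ (σ j) = j from Equiv.Perm.inv_eq_iff_eq.mpr rfl] at h
      exact h
    have h2 : ((c : ℕ)) ≡ ((σ c : Fin (2 ^ n)) : ℕ) * m [MOD 2 ^ n] := by
      have h := hrel (σ c)
      rw [show σ⁻¹ (σ c) = c from Equiv.Perm.inv_eq_iff_eq.mpr rfl] at h
      exact h
    have e1 : ((σ j : Fin (2 ^ n)) : ℕ) * (c : ℕ) ≡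
        ((σ j : Fin (2 ^ n)) : ℕ) * (((σ c : Fin (2 ^ n)) : ℕ) * m) [MOD 2 ^ n] :=
      Nat.ModEq.mul_left _ h2
    have e2 : (j : ℕ) * ((σ c : Fin (2 ^ n)) : ℕ) ≡
        (((σ j : Fin (2 ^ n)) : ℕ) * m) * ((σ c : Fin (2 ^ n)) : ℕ) [MOD 2 ^ n] :=
      Nat.ModEq.mul_right _ h1
    have e3 : ((σ j : Fin (2 ^ n)) : ℕ) * (((σ c : Fin (2 ^ n)) : ℕ) * m) =
        (((σ j : Fin (2 ^ n)) : ℕ) * m) * ((σ c : Fin (2 ^ n)) : ℕ) := by ring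
    exact e1.trans (e3 ▸ e2.symm)
  -- the Fourier matrix
  set F : Matrix (Fin (2 ^ n)) (Fin (2 ^ n)) ℂ :=
    Matrix.of (fun i j : Fin (2 ^ n) => lam ^ ((i : ℕ) * (j : ℕ))) with hF
  have hFu : IsUnit F := by
    rw [Matrix.isUnit_iff_isUnit_det]
    have hFvan : F = Matrix.vandermonde (fun i : Fin (2 ^ n) => lam ^ (i : ℕ)) := by
      ext i j
      rw [hF, Matrix.of_apply, Matrix.vandermonde_apply, ← pow_mul]
    rw [hFvan, Matrix.det_vandermonde, isUnit_iff_ne_zero]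
    apply Finset.prod_ne_zero_iff.mpr
    intro i _
    apply Finset.prod_ne_zero_iff.mpr
    intro j hj
    have hij : i < j := Finset.mem_Ioi.mp hj
    intro h
    have h' : lam ^ (j : ℕ) = lam ^ (i : ℕ) := by linear_combination h
    exact absurd (Fin.ext (hlam.pow_inj j.isLt i.isLt h')) (Fin.ne_of_gt hij)
  set U : (Matrix (Fin (2 ^ n)) (Fin (2 ^ n)) ℂ)ˣ := hFu.unit with hU
  have hUv : U.val = F := hFu.unit_spec
  -- the rotation permutation and mod-arithmetic helper
  set ρ : Equiv.Perm (Fin (2 ^ n)) := (Equiv.addRight (1 : Fin (2 ^ n)))⁻¹ with hρ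
  have hadd : ∀ x : Fin (2 ^ n),
      (((x + 1 : Fin (2 ^ n))) : ℕ) % 2 ^ n = ((x : ℕ) + 1) % 2 ^ n := by
    intro x
    rw [Fin.add_def]
    show ((x : ℕ) + ((1 : Fin (2 ^ n)) : ℕ)) % 2 ^ n % 2 ^ n = _
    rw [Nat.mod_mod, Fin.val_one', Nat.add_mod (x : ℕ) (1 % 2 ^ n), Nat.mod_mod,
      ← Nat.add_mod]
  -- conjugation identities for F
  have hDF : D * F = F * ρ.permMatrix ℂ := by
    ext i j
    rw [mul_pm_apply, hρ, inv_inv]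
    show (D * F) i j = F i (j + 1)
    rw [hD, hF, Matrix.diagonal_mul, Matrix.of_apply, Matrix.of_apply, ← pow_add]
    apply (hiff _ _).mpr
    have e : (i : ℕ) + (i : ℕ) * (j : ℕ) = (i : ℕ) * ((j : ℕ) + 1) := by ring
    rw [e]
    exact (Nat.ModEq.mul_left (i : ℕ) (hadd j)).symm
  have hPF : σ.permMatrix ℂ * F = F * (σ⁻¹).permMatrix ℂ := by
    ext i j
    rw [pm_mul_apply, mul_pm_apply, inv_inv, hF, Matrix.of_apply, Matrix.of_apply]
    exact hkey i j
  -- the simultaneous conjugating matrix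
  refine ⟨T * U, ?_⟩
  have key : ∀ g : GL (Fin (2 ^ n)) ℂ, g ∈ Subgroup.closure {A, C} →
      IsPermMatrix (((T * U)⁻¹ * g * (T * U)).val) := by
    intro g hg
    induction hg using Subgroup.closure_induction with
    | mem x hx =>
      rcases hx with hx | hx
      · -- x = A
        subst hx
        refine ⟨σ⁻¹, ?_⟩
        have : (T * U)⁻¹ * x * (T * U) = U⁻¹ * a' * U := by
          rw [ha']
          group
        rw [this, Units.val_mul, Units.val_mul, ha'v, hUv, Matrix.mul_assoc, hPF,
          ← Matrix.mul_assoc, ← hUv]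
        have hUinv : U⁻¹.val * U.val = 1 := by
          rw [← Units.val_mul, inv_mul_cancel, Units.val_one]
        rw [hUinv, Matrix.one_mul]
      · -- x = C
        rw [Set.mem_singleton_iff] at hx
        subst hx
        refine ⟨ρ, ?_⟩
        have : (T * U)⁻¹ * x * (T * U) = U⁻¹ * c' * U := by
          rw [hc']
          group
        rw [this, Units.val_mul, Units.val_mul, hc'v, hUv, Matrix.mul_assoc, hDF,
          ← Matrix.mul_assoc, ← hUv]
        have hUinv : U⁻¹.val * U.val = 1 := by
          rw [← Units.val_mul, inv_mul_cancel, Units.val_one]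
        rw [hUinv, Matrix.one_mul]
    | one =>
      refine ⟨1, ?_⟩
      rw [mul_one, inv_mul_cancel, Units.val_one, pm_one]
    | mul x y hx hy px py =>
      obtain ⟨σx, hσx⟩ := px
      obtain ⟨σy, hσy⟩ := py
      refine ⟨σy * σx, ?_⟩
      have : (T * U)⁻¹ * (x * y) * (T * U) =
          ((T * U)⁻¹ * x * (T * U)) * ((T * U)⁻¹ * y * (T * U)) := by group
      rw [this, Units.val_mul, hσx, hσy, pm_mul_pm]
    | inv x hx px =>
      obtain ⟨σx, hσx⟩ := px
      refine ⟨σx⁻¹, ?_⟩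
      have : (T * U)⁻¹ * x⁻¹ * (T * U) = ((T * U)⁻¹ * x * (T * U))⁻¹ := by group
      rw [this]
      exact unit_inv_pm _ _ hσx
  intro g hg
  have h := key g hg
  obtain ⟨τ, hτ⟩ := h
  exact ⟨τ, by rw [← hτ]; simp [Units.val_mul, Matrix.mul_assoc]⟩
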